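/- For any subfamily 𝔠′ of the circuits of a matroid M, the ideal generated by the differentials of 𝔠′ equals the ideal generated by the differentials of its Δ-closure: ℑ(𝔠′) = ℑ(cl_Δ(𝔠′)). -/

import Mathlib

open ExteriorAlgebra

/-- The Grassmann algebra over `K` on generators `e 0, ..., e (n-1)`. -/
abbrev Grass (K : Type) [Field K] (n : ℕ) := ExteriorAlgebra K (Fin n → K)

/-- The generator `e i`. -/
noncomputable def gen (K : Type) [Field K] (n : ℕ) (i : Fin n) : Grass K n :=
  ExteriorAlgebra.ι K (Pi.single i 1)

/-- The monomial associated to a list of indices. -/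
noncomputable def monList (K : Type) [Field K] (n : ℕ) (l : List (Fin n)) : Grass K n :=
  (l.map (gen K n)).prod

/-- The monomial `e_X` of a subset `X ⊆ [n]`, factors in increasing order. -/
noncomputable def mon (K : Type) [Field K] (n : ℕ) (X : Finset (Fin n)) : Grass K n :=
  monList K n (X.sort (· ≤ ·))

/-- The degree `-1` antiderivation `∂` on the Grassmann algebra with `∂ (e i) = 1`
(left contraction with the covector sending each generator to `1`). -/
noncomputable def bd (K : Type) [Field K] (n : ℕ) : Grass K n →ₗ[K] Grass K n :=
  CliffordAlgebra.contractLeft (∑ i : Fin n, LinearMap.proj i)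

/-- The two-sided ideal `ℑ(𝔛)` generated by the differentials `∂ e_Y`, `Y ∈ 𝔛`. -/
noncomputable def OSIdeal (K : Type) [Field K] (n : ℕ) (X : Set (Finset (Fin n))) :
    TwoSidedIdeal (Grass K n) :=
  TwoSidedIdeal.span ((fun Y => bd K n (mon K n Y)) '' X)

/-- A circuit of a matroid: a minimal dependent (finite) set. -/
def IsCircuit {α : Type} [DecidableEq α] (M : Matroid α) (C : Finset α) : Prop :=
  M.Dep (C : Set α) ∧ ∀ D : Finset α, D ⊂ C → ¬ M.Dep (D : Set α)

/-- `i` is a chord of the circuit `C`, witnessed by circuits `C₁, C₂` with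
`C₁ ∩ C₂ = {i}` and `C = C₁ Δ C₂`. -/
def IsChord {α : Type} [DecidableEq α] (M : Matroid α) (C : Finset α) (i : α) : Prop :=
  ∃ C₁ C₂ : Finset α, IsCircuit M C₁ ∧ IsCircuit M C₂ ∧ C₁ ∩ C₂ = {i} ∧ C = symmDiff C₁ C₂

def HasChord {α : Type} [DecidableEq α] (M : Matroid α) (C : Finset α) : Prop :=
  ∃ i, IsChord M C i

/-- `M` is `ℓ`-chordal: every circuit with at least `ℓ` elements has a chord. -/
def Chordal {α : Type} [DecidableEq α] (M : Matroid α) (l : ℕ) : Prop :=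
  ∀ C : Finset α, IsCircuit M C → l ≤ C.card → HasChord M C

/-- `M` is simple: every circuit has at least 3 elements. -/
def SimpleM {α : Type} [DecidableEq α] (M : Matroid α) : Prop :=
  ∀ C : Finset α, IsCircuit M C → 3 ≤ C.card

/-- `M` is binary: the symmetric difference of two distinct circuits contains a circuit. -/
def BinaryM {α : Type} [DecidableEq α] (M : Matroid α) : Prop :=
  ∀ C D : Finset α, IsCircuit M C → IsCircuit M D → C ≠ D →
    ∃ C', IsCircuit M C' ∧ C' ⊆ symmDiff C D

/-- The set `𝔠` of circuits of `M`. -/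
def Circuits {α : Type} [DecidableEq α] (M : Matroid α) : Set (Finset α) :=
  {C | IsCircuit M C}

/-- The set `𝔠_k` of circuits of `M` with at most `k` elements. -/
def CircuitsLe {α : Type} [DecidableEq α] (M : Matroid α) (k : ℕ) : Set (Finset α) :=
  {C | IsCircuit M C ∧ C.card ≤ k}

/-- A family of subsets is `Δ`-closed: upward closed, and closed under symmetric
differences of two members of size `≥ 2` meeting in exactly one element. -/
def DeltaClosed {α : Type} [DecidableEq α] (X : Set (Finset α)) : Prop :=
  (∀ A B : Finset α, A ⊆ B → A ∈ X → B ∈ X) ∧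
  (∀ A B : Finset α, ∀ i : α, A ∈ X → B ∈ X → 2 ≤ A.card → 2 ≤ B.card →
      A ∩ B = {i} → symmDiff A B ∈ X)

/-- The smallest `Δ`-closed family containing `Z`. -/
def clDelta {α : Type} [DecidableEq α] (Z : Set (Finset α)) : Set (Finset α) :=
  ⋂₀ {X | DeltaClosed X ∧ Z ⊆ X}

variable {K : Type} [Field K] {n : ℕ}

lemma bd_one : bd K n 1 = 0 := CliffordAlgebra.contractLeft_one _ _

lemma bd_gen_mul (i : Fin n) (x : Grass K n) :
    bd K n (gen K n i * x) = x - gen K n i * bd K n x := by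
  show CliffordAlgebra.contractLeft _ (CliffordAlgebra.ι (0 : QuadraticForm K (Fin n → K)) _ * x) = _
  rw [CliffordAlgebra.contractLeft_ι_mul]
  have h : (∑ j : Fin n, (LinearMap.proj j : (Fin n → K) →ₗ[K] K)) (Pi.single i (1:K)) = 1 := by
    simp [Finset.sum_pi_single']
  rw [h, one_smul]
  rfl

lemma monList_cons (i : Fin n) (l : List (Fin n)) :
    monList K n (i :: l) = gen K n i * monList K n l := by
  simp [monList]

lemma monList_nil : monList K n [] = 1 := rfl

lemma monList_append (l m : List (Fin n)) :
    monList K n (l ++ m) = monList K n l * monList K n m := by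
  simp [monList]

lemma bd_monList_cons (i : Fin n) (l : List (Fin n)) :
    bd K n (monList K n (i :: l)) = monList K n l - gen K n i * bd K n (monList K n l) := by
  rw [monList_cons, bd_gen_mul]

lemma gen_sq (i : Fin n) : gen K n i * gen K n i = 0 := by
  simpa [gen] using ExteriorAlgebra.ι_sq_zero (R := K) (M := Fin n → K) (Pi.single i (1:K))

lemma gen_anticomm (i j : Fin n) : gen K n i * gen K n j = - (gen K n j * gen K n i) := by
  have := ExteriorAlgebra.ι_sq_zero (R := K) (M := Fin n → K) (Pi.single i (1:K) + Pi.single j (1:K))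
  rw [map_add, add_mul, mul_add, mul_add] at this
  have hi := ExteriorAlgebra.ι_sq_zero (R := K) (M := Fin n → K) (Pi.single i (1:K))
  have hj := ExteriorAlgebra.ι_sq_zero (R := K) (M := Fin n → K) (Pi.single j (1:K))
  rw [hi, hj] at this
  simp only [zero_add, add_zero] at this
  exact eq_neg_of_add_eq_zero_left this

/-- product rule -/
lemma bd_mul (l : List (Fin n)) (y : Grass K n) :
    bd K n (monList K n l * y)
      = bd K n (monList K n l) * y + ((-1 : K) ^ l.length) • (monList K n l * bd K n y) := by
  induction l with
  | nil => simp [monList_nil, bd_one]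
  | cons i l ih =>
    rw [monList_cons, mul_assoc, bd_gen_mul, bd_gen_mul, ih, mul_add, sub_mul]
    rw [List.length_cons, pow_succ]
    simp only [mul_smul, neg_one_smul, smul_neg, mul_assoc]
    rw [Algebra.mul_smul_comm]
    abel

/-- permutation changes the monomial only by a sign -/
lemma monList_perm {l l' : List (Fin n)} (h : l.Perm l') :
    monList K n l = monList K n l' ∨ monList K n l = - monList K n l' := by
  induction h with
  | nil => left; rfl
  | cons x h ih =>
    rw [monList_cons, monList_cons]
    rcases ih with h1 | h1
    · left; rw [h1]
    · right; rw [h1, mul_neg]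
  | swap x y l =>
    right
    rw [monList_cons, monList_cons, monList_cons, monList_cons, ← mul_assoc, ← mul_assoc,
      gen_anticomm y x, neg_mul]
  | trans h1 h2 ih1 ih2 =>
    rcases ih1 with a | a <;> rcases ih2 with b | b
    · left; rw [a, b]
    · right; rw [a, b]
    · right; rw [a, b]
    · left; rw [a, b, neg_neg]

lemma bd_single (i : Fin n) : bd K n (monList K n [i]) = 1 := by
  rw [bd_monList_cons, monList_nil, bd_one, mul_zero, sub_zero]

/-- The key algebraic identity. -/
lemma key_identity (a b : List (Fin n)) (i : Fin n) :
    bd K n (monList K n (a ++ b))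
      = bd K n (monList K n a) * bd K n (monList K n (i :: b))
        + bd K n (monList K n (a ++ [i])) * bd K n (monList K n b) := by
  rw [monList_append, bd_mul, monList_append, bd_mul, bd_single, bd_monList_cons]
  have : monList K n [i] = gen K n i := by simp [monList]
  rw [this]
  simp only [mul_sub, add_mul, sub_mul, smul_mul_assoc, mul_one]
  simp only [mul_assoc]
  abel

/-- transfer bd ∈ I along permutations -/
lemma mem_of_perm {I : TwoSidedIdeal (Grass K n)} {l l' : List (Fin n)} (h : l.Perm l')
    (hm : bd K n (monList K n l') ∈ I) : bd K n (monList K n l) ∈ I := by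
  rcases monList_perm (K := K) h with h1 | h1
  · rw [h1]; exact hm
  · rw [h1, map_neg]; exact I.neg_mem hm

lemma sort_perm_of_val_eq {X : Finset (Fin n)} {l : List (Fin n)}
    (h : X.val = (l : Multiset (Fin n))) : (X.sort (· ≤ ·)).Perm l := by
  have := Finset.sort_eq X (· ≤ ·)
  rw [h] at this
  exact Quotient.exact this

lemma smul_mem' (I : TwoSidedIdeal (Grass K n)) (c : K) {x : Grass K n} (h : x ∈ I) :
    c • x ∈ I := by
  rw [Algebra.smul_def]; exact I.mul_mem_left _ _ h

/-- If `A` is nonempty and `∂ e_A ∈ I` then `e_A ∈ I`. -/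
lemma mon_mem (I : TwoSidedIdeal (Grass K n)) {A : Finset (Fin n)} (hA : A.Nonempty)
    (h : bd K n (mon K n A) ∈ I) : mon K n A ∈ I := by
  obtain ⟨i, hi⟩ := hA
  have hperm : (A.sort (· ≤ ·)).Perm (i :: (A.erase i).sort (· ≤ ·)) := by
    apply sort_perm_of_val_eq
    rw [← Multiset.cons_coe, Finset.sort_eq, Finset.erase_val,
      Multiset.cons_erase (Finset.mem_def.mp hi)]
  have hz : gen K n i * mon K n A = 0 := by
    rcases monList_perm (K := K) hperm with h1 | h1
    · rw [mon, h1, monList_cons, ← mul_assoc, gen_sq, zero_mul]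
    · rw [mon, h1, monList_cons, mul_neg, ← mul_assoc, gen_sq, zero_mul, neg_zero]
  have := bd_gen_mul i (mon K n A)
  rw [hz, map_zero] at this
  have h2 : mon K n A = gen K n i * bd K n (mon K n A) := by
    have := this.symm
    rwa [sub_eq_zero] at this
  rw [h2]
  exact I.mul_mem_left _ _ h

/-- Upward closure. -/
lemma bd_mon_mem_of_subset (I : TwoSidedIdeal (Grass K n)) {A B : Finset (Fin n)}
    (hA : A.Nonempty) (hAB : A ⊆ B) (h : bd K n (mon K n A) ∈ I) : bd K n (mon K n B) ∈ I := by
  have hperm : (B.sort (· ≤ ·)).Perm (A.sort (· ≤ ·) ++ (B \ A).sort (· ≤ ·)) := by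
    apply sort_perm_of_val_eq
    rw [← Multiset.coe_add, Finset.sort_eq, Finset.sort_eq, Finset.sdiff_val,
      add_tsub_cancel_of_le (Finset.val_le_iff.mpr hAB)]
  apply mem_of_perm hperm
  rw [monList_append, bd_mul]
  refine I.add_mem ?_ ?_
  · exact I.mul_mem_right _ _ h
  · exact smul_mem' I _ (I.mul_mem_right _ _ (mon_mem I hA h))

/-- Symmetric difference. -/
lemma bd_mon_symmDiff_mem (I : TwoSidedIdeal (Grass K n)) {A B : Finset (Fin n)} {i : Fin n}
    (hAB : A ∩ B = {i}) (hA : bd K n (mon K n A) ∈ I) (hB : bd K n (mon K n B) ∈ I) :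
    bd K n (mon K n (symmDiff A B)) ∈ I := by
  have hmem : ∀ x, (x ∈ A ∧ x ∈ B) ↔ x = i := fun x => by
    rw [← Finset.mem_inter, hAB, Finset.mem_singleton]
  have hiA : i ∈ A := ((hmem i).mpr rfl).1
  have hiB : i ∈ B := ((hmem i).mpr rfl).2
  have hAe : A \ B = A.erase i := by
    ext x
    simp only [Finset.mem_sdiff, Finset.mem_erase]
    constructor
    · rintro ⟨hxA, hxB⟩
      exact ⟨fun he => hxB (he ▸ hiB), hxA⟩
    · rintro ⟨hne, hxA⟩
      exact ⟨hxA, fun hxB => hne ((hmem x).mp ⟨hxA, hxB⟩)⟩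
  have hBe : B \ A = B.erase i := by
    ext x
    simp only [Finset.mem_sdiff, Finset.mem_erase]
    constructor
    · rintro ⟨hxB, hxA⟩
      exact ⟨fun he => hxA (he ▸ hiA), hxB⟩
    · rintro ⟨hne, hxB⟩
      exact ⟨hxB, fun hxA => hne ((hmem x).mp ⟨hxA, hxB⟩)⟩
  set a := (A \ B).sort (· ≤ ·) with ha
  set b := (B \ A).sort (· ≤ ·) with hb
  have hperm : ((symmDiff A B).sort (· ≤ ·)).Perm (a ++ b) := by
    apply sort_perm_of_val_eq
    have hd : Disjoint (A \ B) (B \ A) := disjoint_sdiff_sdiff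
    have : symmDiff A B = (A \ B).disjUnion (B \ A) hd := by
      rw [Finset.disjUnion_eq_union]
      rfl
    rw [this]
    show (A \ B).val + (B \ A).val = _
    rw [← Multiset.coe_add, ha, hb, Finset.sort_eq, Finset.sort_eq]
  apply mem_of_perm hperm
  rw [key_identity a b i]
  have hpermA : (a ++ [i]).Perm (A.sort (· ≤ ·)) := by
    apply List.Perm.symm
    apply sort_perm_of_val_eq
    rw [← Multiset.coe_add, ha, Finset.sort_eq, hAe, Finset.erase_val]
    show A.val = A.val.erase i + {i}
    rw [add_comm, Multiset.singleton_add, Multiset.cons_erase (Finset.mem_def.mp hiA)]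
  have hpermB : (i :: b).Perm (B.sort (· ≤ ·)) := by
    apply List.Perm.symm
    apply sort_perm_of_val_eq
    rw [← Multiset.cons_coe, hb, Finset.sort_eq, hBe, Finset.erase_val,
      Multiset.cons_erase (Finset.mem_def.mp hiB)]
  have h1 : bd K n (monList K n (a ++ [i])) ∈ I := mem_of_perm hpermA hA
  have h2 : bd K n (monList K n (i :: b)) ∈ I := mem_of_perm hpermB hB
  exact I.add_mem (I.mul_mem_left _ _ h2) (I.mul_mem_right _ _ h1)


/-- for any subfamily `𝔠'` of the circuits of `M`, `ℑ(𝔠') = ℑ(cl_Δ(𝔠'))`. -/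
theorem stmt6 (K : Type) [Field K] (n : ℕ) (M : Matroid (Fin n)) (hE : M.E = Set.univ)
    (hs : SimpleM M) (C' : Set (Finset (Fin n))) (hC' : C' ⊆ Circuits M) :
    OSIdeal K n C' = OSIdeal K n (clDelta C') := by
  have hne : ∀ Y ∈ C', Finset.Nonempty Y := by
    intro Y hY
    have h3 := hs Y (hC' hY)
    rw [← Finset.card_pos]
    omega
  apply le_antisymm
  · apply TwoSidedIdeal.span_mono
    apply Set.image_mono
    intro Y hY X hX
    exact hX.2 hY
  · set T : Set (Finset (Fin n)) :=
      {Y | Y.Nonempty ∧ bd K n (mon K n Y) ∈ OSIdeal K n C'} with hT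
    have hTclosed : DeltaClosed T := by
      constructor
      · intro A B hAB hA
        exact ⟨hA.1.mono hAB, bd_mon_mem_of_subset _ hA.1 hAB hA.2⟩
      · intro A B i hA hB h2A h2B hint
        refine ⟨?_, bd_mon_symmDiff_mem _ hint hA.2 hB.2⟩
        have h1 : (A.erase i).Nonempty := by
          rw [← Finset.card_pos, Finset.card_erase_of_mem]
          · omega
          · have : i ∈ A ∩ B := by rw [hint]; exact Finset.mem_singleton_self i
            exact (Finset.mem_inter.mp this).1
        obtain ⟨x, hx⟩ := h1
        rw [Finset.mem_erase] at hx
        refine ⟨x, Finset.mem_symmDiff.mpr (Or.inl ⟨hx.2, fun hxB => ?_⟩)⟩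
        have : x ∈ A ∩ B := Finset.mem_inter.mpr ⟨hx.2, hxB⟩
        rw [hint, Finset.mem_singleton] at this
        exact hx.1 this
    have hsubT : C' ⊆ T := fun Y hY =>
      ⟨hne Y hY, TwoSidedIdeal.subset_span ⟨Y, hY, rfl⟩⟩
    have hcl : clDelta C' ⊆ T := Set.sInter_subset_of_mem ⟨hTclosed, hsubT⟩
    intro x hx
    rw [OSIdeal, TwoSidedIdeal.mem_span_iff] at hx
    apply hx
    rintro _ ⟨Y, hY, rfl⟩
    exact (hcl hY).2
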